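/- Let G be a finite simple graph with at least one edge and let n be such that the Kneser graph Kn(n, emb(n,G)) contains a subgraph isomorphic to G. Then every G-free family F of subsets of [n] misses at least C(n, emb(n,G)) / |V(G)| subsets of size emb(n,G); consequently 2^n - vex(n,G) ≥ C(n, emb(n,G)) / |V(G)|. -/

import Mathlib

open Finset

/-- The Kneser cube: the simple graph on all subsets of `[n]`, with two distinct
sets adjacent iff they are disjoint. -/
def kneserCube (n : ℕ) : SimpleGraph (Finset (Fin n)) where
  Adj A B := A ≠ B ∧ Disjoint A B
  symm := ⟨fun _ _ h => ⟨h.1.symm, h.2.symm⟩⟩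
  loopless := ⟨fun _ h => h.1 rfl⟩

/-- The Kneser graph `Kn(n, m)`: the simple graph on all `m`-element subsets of `[n]`,
with two distinct sets adjacent iff they are disjoint. -/
def kneserGraph (n m : ℕ) : SimpleGraph {A : Finset (Fin n) // A.card = m} where
  Adj A B := A ≠ B ∧ Disjoint A.1 B.1
  symm := ⟨fun _ _ h => ⟨h.1.symm, h.2.symm⟩⟩
  loopless := ⟨fun _ h => h.1 rfl⟩

/-- `H` contains a subgraph isomorphic to `G`, i.e. there is an injective graph
homomorphism from `G` into `H`. -/
def hasCopy {V W : Type*} (G : SimpleGraph V) (H : SimpleGraph W) : Prop :=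
  ∃ f : V → W, Function.Injective f ∧ ∀ a b, G.Adj a b → H.Adj (f a) (f b)

/-- A family `F` of subsets of `[n]` is `G`-free if the subgraph of the Kneser cube
induced on `F` contains no subgraph isomorphic to `G`. -/
def gFree {V : Type*} (G : SimpleGraph V) (n : ℕ) (F : Finset (Finset (Fin n))) : Prop :=
  ¬ ∃ f : V → Finset (Fin n),
      Function.Injective f ∧ (∀ v, f v ∈ F) ∧
        ∀ a b, G.Adj a b → (kneserCube n).Adj (f a) (f b)

/-- `vexG n G` : the maximum size of a `G`-free family of subsets of `[n]`. -/
noncomputable def vexG {V : Type*} (n : ℕ) (G : SimpleGraph V) : ℕ :=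
  sSup {k | ∃ F : Finset (Finset (Fin n)), gFree G n F ∧ F.card = k}

/-- `emb n G` : the maximum `m` such that the Kneser graph `Kn(n, m)` contains a
subgraph isomorphic to `G`. -/
noncomputable def emb {V : Type*} (n : ℕ) (G : SimpleGraph V) : ℕ :=
  sSup {m | hasCopy G (kneserGraph n m)}

lemma fiber_card_le {n m : ℕ} (A X : Finset (Fin n)) (hA : A.card = m) (hX : X.card = m) :
    (univ.filter fun σ : Equiv.Perm (Fin n) => A.image σ = X).card ≤
      m.factorial * (n - m).factorial := by
  classical
  have hc1 : Fintype.card {x // x ∈ A} = Fintype.card {x // x ∈ X} := by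
    simp [Fintype.card_coe, hA, hX]
  have hc2 : Fintype.card {x : Fin n // x ∉ A} = Fintype.card {x : Fin n // x ∉ X} := by
    simp [Fintype.card_subtype_compl, Fintype.card_coe, hA, hX]
  have ne1 : Nonempty ({x // x ∈ A} ≃ {x // x ∈ X}) := ⟨Fintype.equivOfCardEq hc1⟩
  have ne2 : Nonempty ({x : Fin n // x ∉ A} ≃ {x : Fin n // x ∉ X}) :=
    ⟨Fintype.equivOfCardEq hc2⟩
  have hT : Nonempty (({x // x ∈ A} ≃ {x // x ∈ X}) ×
      ({x : Fin n // x ∉ A} ≃ {x : Fin n // x ∉ X})) := ⟨⟨ne1.some, ne2.some⟩⟩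
  let g : Equiv.Perm (Fin n) →
      ({x // x ∈ A} ≃ {x // x ∈ X}) × ({x : Fin n // x ∉ A} ≃ {x : Fin n // x ∉ X}) :=
    fun σ =>
      if h : ∀ x, x ∈ A ↔ σ x ∈ X then
        (σ.subtypeEquiv h, σ.subtypeEquiv (fun x => not_congr (h x)))
      else Classical.arbitrary _
  have key : ∀ σ ∈ univ.filter (fun σ : Equiv.Perm (Fin n) => A.image σ = X),
      ∀ x, x ∈ A ↔ σ x ∈ X := by
    intro σ hσ x
    simp only [mem_filter, mem_univ, true_and] at hσ
    constructor
    · intro hx; rw [← hσ]; exact mem_image_of_mem _ hx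
    · intro hx; rw [← hσ] at hx
      obtain ⟨a, ha, hax⟩ := mem_image.1 hx
      exact (σ.injective hax) ▸ ha
  have hle : (univ.filter fun σ : Equiv.Perm (Fin n) => A.image σ = X).card ≤
      (univ : Finset (({x // x ∈ A} ≃ {x // x ∈ X}) ×
        ({x : Fin n // x ∉ A} ≃ {x : Fin n // x ∉ X}))).card := by
    apply Finset.card_le_card_of_injOn g (fun _ _ => mem_univ _)
    intro σ hσ σ' hσ' heq
    have h1 := key σ hσ
    have h2 := key σ' hσ'
    simp only [g, dif_pos h1, dif_pos h2] at heq
    apply Equiv.ext; intro x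
    by_cases hx : x ∈ A
    · have := congrArg (fun e => (e ⟨x, hx⟩ : {x // x ∈ X}).1) (congrArg Prod.fst heq)
      simpa using this
    · have := congrArg (fun e => (e ⟨x, hx⟩ : {x : Fin n // x ∉ X}).1) (congrArg Prod.snd heq)
      simpa using this
  calc (univ.filter fun σ : Equiv.Perm (Fin n) => A.image σ = X).card
      ≤ _ := hle
    _ = m.factorial * (n - m).factorial := by
        rw [Finset.card_univ, Fintype.card_prod, Fintype.card_equiv ne1.some,
          Fintype.card_equiv ne2.some]
        simp [Fintype.card_coe, hA, Fintype.card_subtype_compl]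

lemma main_count {V : Type*} [Fintype V] (G : SimpleGraph V) (n m : ℕ)
    (f : V → {A : Finset (Fin n) // A.card = m}) (hinj : Function.Injective f)
    (hadj : ∀ a b, G.Adj a b → (kneserGraph n m).Adj (f a) (f b))
    (hV : Nonempty V) (F : Finset (Finset (Fin n))) (hF : gFree G n F) :
    n.choose m ≤
      (univ.filter fun X : Finset (Fin n) => X.card = m ∧ X ∉ F).card * Fintype.card V := by
  classical
  set M := univ.filter fun X : Finset (Fin n) => X.card = m ∧ X ∉ F with hM
  obtain ⟨v₀⟩ := hV
  have hmn : m ≤ n := by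
    have := (f v₀).2 ▸ Finset.card_le_univ (f v₀).1
    simpa using this
  -- for every permutation, some image set is missed
  have hex : ∀ σ : Equiv.Perm (Fin n), ∃ v, ((f v).1.image σ) ∉ F := by
    intro σ
    by_contra h
    push_neg at h
    apply hF
    refine ⟨fun v => (f v).1.image σ, ?_, h, ?_⟩
    · intro a b hab
      have h1 : (f a).1.image σ = (f b).1.image σ := hab
      have h2 : (f a).1 = (f b).1 := Finset.image_injective σ.injective h1
      exact hinj (Subtype.ext h2)
    · intro a b hab
      obtain ⟨hne, hdisj⟩ := hadj a b hab
      constructor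
      · intro h1
        exact hne (Subtype.ext (Finset.image_injective σ.injective h1))
      · exact Finset.disjoint_image σ.injective |>.mpr hdisj
  choose wv hwv using hex
  set w : Equiv.Perm (Fin n) → Finset (Fin n) := fun σ => (f (wv σ)).1.image σ with hw
  have himg : ∀ σ, w σ ∈ M := by
    intro σ
    simp only [hM, mem_filter, mem_univ, true_and]
    exact ⟨by rw [Finset.card_image_of_injective _ σ.injective]; exact (f (wv σ)).2, hwv σ⟩
  set K := m.factorial * (n - m).factorial with hK
  have hfib : ∀ b ∈ (univ : Finset (Equiv.Perm (Fin n))).image w,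
      ((univ : Finset (Equiv.Perm (Fin n))).filter fun σ => w σ = b).card ≤
        Fintype.card V * K := by
    intro b hb
    obtain ⟨σ₀, _, hσ₀⟩ := mem_image.1 hb
    have hbcard : b.card = m := by
      rw [← hσ₀, hw]
      simp only []
      rw [Finset.card_image_of_injective _ σ₀.injective]; exact (f (wv σ₀)).2
    have hsub : ((univ : Finset (Equiv.Perm (Fin n))).filter fun σ => w σ = b) ⊆
        univ.biUnion fun v : V => univ.filter fun σ : Equiv.Perm (Fin n) =>
          (f v).1.image σ = b := by
      intro σ hσ
      simp only [mem_filter, mem_univ, true_and] at hσ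
      exact mem_biUnion.2 ⟨wv σ, mem_univ _, by simpa [hw] using hσ⟩
    calc _ ≤ _ := Finset.card_le_card hsub
      _ ≤ _ := Finset.card_biUnion_le
      _ ≤ ∑ _v : V, K := Finset.sum_le_sum fun v _ =>
            fiber_card_le (f v).1 b (f v).2 hbcard
      _ = Fintype.card V * K := by simp [Finset.sum_const, Finset.card_univ, mul_comm]
  have hcount : n.factorial ≤ (Fintype.card V * K) * M.card := by
    have h1 : (univ : Finset (Equiv.Perm (Fin n))).card ≤
        (Fintype.card V * K) * ((univ : Finset (Equiv.Perm (Fin n))).image w).card :=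
      Finset.card_le_mul_card_image _ _ hfib
    have h2 : ((univ : Finset (Equiv.Perm (Fin n))).image w).card ≤ M.card :=
      Finset.card_le_card fun b hb => by
        obtain ⟨σ, _, hσ⟩ := mem_image.1 hb; exact hσ ▸ himg σ
    calc n.factorial = (univ : Finset (Equiv.Perm (Fin n))).card := by
          simp [Finset.card_univ, Fintype.card_perm]
      _ ≤ _ := h1
      _ ≤ (Fintype.card V * K) * M.card := Nat.mul_le_mul_left _ h2
  have hKpos : 0 < K := Nat.mul_pos (Nat.factorial_pos _) (Nat.factorial_pos _)
  have hchoose : n.choose m * K = n.factorial := by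
    rw [hK, ← mul_assoc]
    exact Nat.choose_mul_factorial_mul_factorial hmn
  have : n.choose m * K ≤ (M.card * Fintype.card V) * K := by
    rw [hchoose]
    calc n.factorial ≤ (Fintype.card V * K) * M.card := hcount
      _ = (M.card * Fintype.card V) * K := by ring
  exact Nat.le_of_mul_le_mul_right this hKpos

/-- for a finite simple graph `G` with at least one edge, and `n` such
that `Kn(n, emb(n,G))` contains a subgraph isomorphic to `G`, every `G`-free family
`F` of subsets of `[n]` misses at least `C(n, emb(n,G)) / |V(G)|` subsets of size
`emb(n,G)`; consequently `2^n - vex(n,G) ≥ C(n, emb(n,G)) / |V(G)|`. -/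
theorem stmt18 {V : Type*} [Fintype V] (G : SimpleGraph V)
    (hedge : ∃ a b, G.Adj a b) (n : ℕ)
    (hcopy : hasCopy G (kneserGraph n (emb n G))) :
    (∀ F : Finset (Finset (Fin n)), gFree G n F →
      (n.choose (emb n G) : ℝ) / (Fintype.card V : ℝ) ≤
        ((univ.filter fun X : Finset (Fin n) => X.card = emb n G ∧ X ∉ F).card : ℝ)) ∧
      (n.choose (emb n G) : ℝ) / (Fintype.card V : ℝ) ≤
        (2 : ℝ) ^ n - (vexG n G : ℝ) := by

  classical
  obtain ⟨a₀, b₀, hab₀⟩ := hedge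
  have hV : Nonempty V := ⟨a₀⟩
  have hVpos : (0 : ℝ) < Fintype.card V := by
    exact_mod_cast Fintype.card_pos
  set m := emb n G with hm
  obtain ⟨f, hinj, hadj⟩ := hcopy
  have part1 : ∀ F : Finset (Finset (Fin n)), gFree G n F →
      (n.choose m : ℝ) / (Fintype.card V : ℝ) ≤
        ((univ.filter fun X : Finset (Fin n) => X.card = m ∧ X ∉ F).card : ℝ) := by
    intro F hF
    have h := main_count G n m f hinj hadj hV F hF
    rw [div_le_iff₀ hVpos]
    exact_mod_cast h
  refine ⟨part1, ?_⟩
  -- part 2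
  have hSne : {k | ∃ F : Finset (Finset (Fin n)), gFree G n F ∧ F.card = k}.Nonempty := by
    refine ⟨0, ∅, ?_, Finset.card_empty⟩
    rintro ⟨g, -, hg, -⟩
    exact (Finset.notMem_empty _) (hg a₀)
  have hSbdd : BddAbove {k | ∃ F : Finset (Finset (Fin n)), gFree G n F ∧ F.card = k} := by
    refine ⟨2 ^ n, ?_⟩
    rintro k ⟨F, -, rfl⟩
    calc F.card ≤ Fintype.card (Finset (Fin n)) := Finset.card_le_univ F
      _ = 2 ^ n := by simp [Fintype.card_finset]
  obtain ⟨F₀, hF₀, hcard₀⟩ := Nat.sSup_mem hSne hSbdd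
  have hvex : vexG n G = F₀.card := hcard₀.symm
  have h1 := part1 F₀ hF₀
  have hsub : (univ.filter fun X : Finset (Fin n) => X.card = m ∧ X ∉ F₀) ⊆
      univ \ F₀ := by
    intro X hX
    simp only [mem_filter, mem_univ, true_and] at hX
    exact Finset.mem_sdiff.2 ⟨mem_univ _, hX.2⟩
  have h2 : ((univ.filter fun X : Finset (Fin n) => X.card = m ∧ X ∉ F₀).card : ℝ) ≤
      (2 : ℝ) ^ n - (vexG n G : ℝ) := by
    have hc : (univ \ F₀).card = 2 ^ n - F₀.card := by
      rw [Finset.card_sdiff_of_subset (Finset.subset_univ F₀), Finset.card_univ]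
      simp [Fintype.card_finset]
    have hle : F₀.card ≤ 2 ^ n := by
      calc F₀.card ≤ Fintype.card (Finset (Fin n)) := Finset.card_le_univ F₀
        _ = 2 ^ n := by simp [Fintype.card_finset]
    calc ((univ.filter fun X : Finset (Fin n) => X.card = m ∧ X ∉ F₀).card : ℝ)
        ≤ ((univ \ F₀).card : ℝ) := by exact_mod_cast Finset.card_le_card hsub
      _ = (2 : ℝ) ^ n - (vexG n G : ℝ) := by
          rw [hc, hvex]
          push_cast [Nat.cast_sub hle]
          ring
  exact le_trans h1 h2
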